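/- Let $A=[a_{i,j}]_{1\le i,j\le 2m}$ be a skew-symmetric matrix of even order over a commutative ring (i.e. $a_{j,i}=-a_{i,j}$ for all $i,j$) such that $a_{i,j}=0$ whenever $i+j$ is an even number greater than two. Then $\mathrm{per}(A)=(-1)^m\left(\mathrm{per}[a_{2i,2j-1}]_{1\le i,j\le m}\right)^2$. -/

import Mathlib

namespace Stmt8Aux

variable (m : ℕ)

def eIdx (j : Fin m) : Fin (2 * m) := ⟨2 * (j : ℕ), by have := j.isLt; linarith⟩

def oIdx (j : Fin m) : Fin (2 * m) := ⟨2 * (j : ℕ) + 1, by have := j.isLt; linarith⟩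

lemma eIdx_injective : Function.Injective (eIdx m) := by
  intro a b h
  simp only [eIdx, Fin.mk.injEq] at h
  exact Fin.ext (by omega)

lemma oIdx_injective : Function.Injective (oIdx m) := by
  intro a b h
  simp only [oIdx, Fin.mk.injEq] at h
  exact Fin.ext (by omega)

def pe : Fin (2 * m) ≃ Fin m ⊕ Fin m where
  toFun i := if (i : ℕ) % 2 = 0 then Sum.inl ⟨(i : ℕ) / 2, by have := i.isLt; omega⟩
    else Sum.inr ⟨(i : ℕ) / 2, by have := i.isLt; omega⟩
  invFun x := x.elim (eIdx m) (oIdx m)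
  left_inv i := by
    dsimp only
    by_cases h : (i : ℕ) % 2 = 0
    · rw [if_pos h]
      exact Fin.ext (show 2 * ((i : ℕ) / 2) = (i : ℕ) by omega)
    · rw [if_neg h]
      exact Fin.ext (show 2 * ((i : ℕ) / 2) + 1 = (i : ℕ) by omega)
  right_inv x := by
    cases x with
    | inl j =>
        have h : ((eIdx m j : Fin (2*m)) : ℕ) % 2 = 0 := by simp [eIdx, Nat.mul_mod_right]
        simp only [Sum.elim_inl]
        simp only [h, ↓reduceIte]
        congr 1
        exact Fin.ext (show 2 * (j : ℕ) / 2 = (j : ℕ) by omega)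
    | inr j =>
        have h : ¬ ((oIdx m j : Fin (2*m)) : ℕ) % 2 = 0 := by simp [oIdx]
        simp only [Sum.elim_inr]
        simp only [h, ↓reduceIte]
        congr 1
        exact Fin.ext (show (2 * (j : ℕ) + 1) / 2 = (j : ℕ) by omega)

@[simp] lemma pe_symm_inl (k : Fin m) : (pe m).symm (Sum.inl k) = eIdx m k := rfl
@[simp] lemma pe_symm_inr (k : Fin m) : (pe m).symm (Sum.inr k) = oIdx m k := rfl

@[simp] lemma pe_eIdx (k : Fin m) : pe m (eIdx m k) = Sum.inl k := by
  rw [← pe_symm_inl]; exact (pe m).apply_symm_apply _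

@[simp] lemma pe_oIdx (k : Fin m) : pe m (oIdx m k) = Sum.inr k := by
  rw [← pe_symm_inr]; exact (pe m).apply_symm_apply _

lemma pe_of_odd (i : Fin (2 * m)) (h : (i : ℕ) % 2 = 1) :
    pe m i = Sum.inr ⟨(i : ℕ) / 2, by have := i.isLt; omega⟩ := by
  simp only [pe, Equiv.coe_fn_mk]
  rw [if_neg (by omega)]

lemma pe_of_even (i : Fin (2 * m)) (h : (i : ℕ) % 2 = 0) :
    pe m i = Sum.inl ⟨(i : ℕ) / 2, by have := i.isLt; omega⟩ := by
  simp only [pe, Equiv.coe_fn_mk]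
  rw [if_pos h]

/-- The permutation of `Fin (2m)` built from a pair of permutations of `Fin m`,
sending even indices to odd ones and vice versa. -/
def Φ (p : Equiv.Perm (Fin m) × Equiv.Perm (Fin m)) : Equiv.Perm (Fin (2 * m)) :=
  (pe m).trans ((Equiv.sumCongr p.1 p.2).trans
    ((Equiv.sumComm (Fin m) (Fin m)).trans (pe m).symm))

@[simp] lemma Φ_eIdx (p : Equiv.Perm (Fin m) × Equiv.Perm (Fin m)) (k : Fin m) :
    Φ m p (eIdx m k) = oIdx m (p.1 k) := by
  simp [Φ]

@[simp] lemma Φ_oIdx (p : Equiv.Perm (Fin m) × Equiv.Perm (Fin m)) (k : Fin m) :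
    Φ m p (oIdx m k) = eIdx m (p.2 k) := by
  simp [Φ]

end Stmt8Aux

namespace Stmt8Aux

lemma card_odds (m : ℕ) :
    (Finset.univ.filter (fun x : Fin (2 * m) => (x : ℕ) % 2 = 1)).card = m := by
  have himg : Finset.univ.filter (fun x : Fin (2 * m) => (x : ℕ) % 2 = 1)
      = Finset.univ.image (oIdx m) := by
    ext x
    simp only [Finset.mem_filter, Finset.mem_univ, true_and, Finset.mem_image]
    constructor
    · intro hx
      exact ⟨⟨(x : ℕ) / 2, by have := x.isLt; omega⟩,
        Fin.ext (show 2 * ((x : ℕ) / 2) + 1 = (x : ℕ) by omega)⟩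
    · rintro ⟨j, -, rfl⟩
      show (2 * (j : ℕ) + 1) % 2 = 1
      omega
  rw [himg, Finset.card_image_of_injective _ (oIdx_injective m)]
  simp

lemma card_evens (m : ℕ) :
    (Finset.univ.filter (fun x : Fin (2 * m) => (x : ℕ) % 2 = 0)).card = m := by
  have himg : Finset.univ.filter (fun x : Fin (2 * m) => (x : ℕ) % 2 = 0)
      = Finset.univ.image (eIdx m) := by
    ext x
    simp only [Finset.mem_filter, Finset.mem_univ, true_and, Finset.mem_image]
    constructor
    · intro hx
      exact ⟨⟨(x : ℕ) / 2, by have := x.isLt; omega⟩,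
        Fin.ext (show 2 * ((x : ℕ) / 2) = (x : ℕ) by omega)⟩
    · rintro ⟨j, -, rfl⟩
      show (2 * (j : ℕ)) % 2 = 0
      omega
  rw [himg, Finset.card_image_of_injective _ (eIdx_injective m)]
  simp

lemma exists_odd_pair (m : ℕ) (σ : Equiv.Perm (Fin (2 * m))) (i0 : Fin (2 * m))
    (h0 : (i0 : ℕ) = 0) (hfix : σ i0 = i0) :
    ∃ j : Fin (2 * m), (j : ℕ) % 2 = 1 ∧ ((σ j : Fin (2 * m)) : ℕ) % 2 = 1 := by
  by_contra hcon
  push_neg at hcon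
  have hm : 1 ≤ m := by have := i0.isLt; omega
  set Odds := Finset.univ.filter (fun x : Fin (2 * m) => (x : ℕ) % 2 = 1) with hO
  set Evens := Finset.univ.filter (fun x : Fin (2 * m) => (x : ℕ) % 2 = 0) with hE
  have hi0E : i0 ∈ Evens := by
    rw [hE, Finset.mem_filter]
    exact ⟨Finset.mem_univ _, by omega⟩
  have hsub : Odds.image σ ⊆ Evens.erase i0 := by
    intro y hy
    simp only [Finset.mem_image] at hy
    obtain ⟨j, hj, rfl⟩ := hy
    rw [hO, Finset.mem_filter] at hj
    have hj1 := hj.2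
    have h2 : ((σ j : Fin (2 * m)) : ℕ) % 2 = 0 := by
      have := hcon j hj1
      omega
    refine Finset.mem_erase.mpr ⟨?_, ?_⟩
    · intro hco
      have : j = i0 := σ.injective (hco.trans hfix.symm)
      rw [this] at hj1
      omega
    · rw [hE, Finset.mem_filter]
      exact ⟨Finset.mem_univ _, h2⟩
  have hc1 : (Odds.image σ).card = m := by
    rw [Finset.card_image_of_injective _ σ.injective, hO, card_odds]
  have hc2 : (Evens.erase i0).card = m - 1 := by
    rw [Finset.card_erase_of_mem hi0E, hE, card_evens]
  have := Finset.card_le_card hsub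
  omega

end Stmt8Aux

open Stmt8Aux

/-- If `A = [a_{i,j}]_{1 ≤ i,j ≤ 2m}` (rows/columns indexed `1..2m`, realized as
`Fin (2m)` with `i` standing for the `(i+1)`-st row/column) is a skew-symmetric matrix over a
commutative ring with `a_{i,j} = 0` whenever `i + j` is an even number greater than two, then
`per(A) = (-1)^m (per[a_{2i,2j-1}]_{1≤i,j≤m})^2`. -/
theorem stmt8 {R : Type*} [CommRing R] (m : ℕ)
    (A : Matrix (Fin (2 * m)) (Fin (2 * m)) R)
    (hskew : ∀ i j : Fin (2 * m), A j i = -A i j)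
    (hA : ∀ i j : Fin (2 * m), Even (((i : ℕ) + 1) + ((j : ℕ) + 1)) →
      ((i : ℕ) + 1) + ((j : ℕ) + 1) > 2 → A i j = 0) :
    A.permanent =
      (-1) ^ m *
      (Matrix.of fun i j : Fin m =>
          A ⟨2 * (i : ℕ) + 1, by have := i.isLt; omega⟩
            ⟨2 * (j : ℕ), by have := j.isLt; omega⟩).permanent ^ 2 := by
  classical
  have key : ∀ C : Matrix (Fin m) (Fin m) R,
      (∀ i j, C i j = A (oIdx m i) (eIdx m j)) →
      A.permanent = (-1) ^ m * C.permanent ^ 2 := by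
    intro C hC
    have hz : ∀ i j : Fin (2 * m), (i : ℕ) % 2 = (j : ℕ) % 2 → 0 < (i : ℕ) + (j : ℕ) →
        A i j = 0 := by
      intro i j hp hpos
      exact hA i j (by rw [Nat.even_iff]; omega) (by omega)
    -- terms for non parity-swapping permutations vanish
    have hzero : ∀ σ : Equiv.Perm (Fin (2 * m)),
        (¬ ∀ i : Fin (2 * m), ((σ i : Fin (2 * m)) : ℕ) % 2 ≠ (i : ℕ) % 2) →
        ∏ i, A (σ i) i = 0 := by
      intro σ hσ
      push_neg at hσ
      obtain ⟨i, hi⟩ := hσ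
      by_cases hpos : 0 < ((σ i : Fin (2 * m)) : ℕ) + (i : ℕ)
      · exact Finset.prod_eq_zero (Finset.mem_univ i) (hz _ _ hi hpos)
      · have h0 : (i : ℕ) = 0 := by omega
        have hfix : σ i = i := Fin.ext (by omega)
        obtain ⟨j, hj1, hj2⟩ := exists_odd_pair m σ i h0 hfix
        exact Finset.prod_eq_zero (Finset.mem_univ j) (hz _ _ (by omega) (by omega))
    set S := Finset.univ.filter (fun σ : Equiv.Perm (Fin (2 * m)) =>
        ∀ i : Fin (2 * m), ((σ i : Fin (2 * m)) : ℕ) % 2 ≠ (i : ℕ) % 2) with hSdef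
    have h1 : A.permanent = ∑ σ ∈ S, ∏ i, A (σ i) i := by
      rw [Matrix.permanent, ← Finset.sum_filter_add_sum_filter_not Finset.univ
        (fun σ : Equiv.Perm (Fin (2 * m)) =>
          ∀ i : Fin (2 * m), ((σ i : Fin (2 * m)) : ℕ) % 2 ≠ (i : ℕ) % 2)]
      rw [Finset.sum_eq_zero (fun σ hσ => hzero σ (Finset.mem_filter.mp hσ).2), add_zero, hSdef]
    -- the image of Φ is exactly S
    have hmem : ∀ p : Equiv.Perm (Fin m) × Equiv.Perm (Fin m), Φ m p ∈ S := by
      intro p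
      rw [hSdef, Finset.mem_filter]
      refine ⟨Finset.mem_univ _, fun i => ?_⟩
      by_cases h : (i : ℕ) % 2 = 0
      · have hi : i = eIdx m ⟨(i : ℕ) / 2, by have := i.isLt; omega⟩ :=
          Fin.ext (show (i : ℕ) = 2 * ((i : ℕ) / 2) by omega)
        rw [hi, Φ_eIdx]
        show (2 * _ + 1) % 2 ≠ (2 * ((i : ℕ) / 2)) % 2
        omega
      · have hi : i = oIdx m ⟨(i : ℕ) / 2, by have := i.isLt; omega⟩ :=
          Fin.ext (show (i : ℕ) = 2 * ((i : ℕ) / 2) + 1 by omega)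
        rw [hi, Φ_oIdx]
        show (2 * _) % 2 ≠ (2 * ((i : ℕ) / 2) + 1) % 2
        omega
    have hinj : Function.Injective (Φ m) := by
      intro p q h
      have h1' : ∀ k, p.1 k = q.1 k := fun k => oIdx_injective m (by
        rw [← Φ_eIdx m p k, ← Φ_eIdx m q k, h])
      have h2' : ∀ k, p.2 k = q.2 k := fun k => eIdx_injective m (by
        rw [← Φ_oIdx m p k, ← Φ_oIdx m q k, h])
      exact Prod.ext (Equiv.ext h1') (Equiv.ext h2')
    have hsurj : ∀ σ ∈ S, ∃ p : Equiv.Perm (Fin m) × Equiv.Perm (Fin m), Φ m p = σ := by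
      intro σ hσ
      rw [hSdef, Finset.mem_filter] at hσ
      have hswap := hσ.2
      have hoE : ∀ k : Fin m, ((σ (eIdx m k) : Fin (2 * m)) : ℕ) % 2 = 1 := by
        intro k
        have := hswap (eIdx m k)
        have he : ((eIdx m k : Fin (2 * m)) : ℕ) % 2 = 0 := by
          show (2 * (k : ℕ)) % 2 = 0; omega
        omega
      have hoO : ∀ k : Fin m, ((σ (oIdx m k) : Fin (2 * m)) : ℕ) % 2 = 0 := by
        intro k
        have := hswap (oIdx m k)
        have ho : ((oIdx m k : Fin (2 * m)) : ℕ) % 2 = 1 := by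
          show (2 * (k : ℕ) + 1) % 2 = 1; omega
        omega
      set fα : Fin m → Fin m := fun k =>
        ⟨((σ (eIdx m k) : Fin (2 * m)) : ℕ) / 2, by
          have := (σ (eIdx m k)).isLt; omega⟩ with hfα
      set fβ : Fin m → Fin m := fun k =>
        ⟨((σ (oIdx m k) : Fin (2 * m)) : ℕ) / 2, by
          have := (σ (oIdx m k)).isLt; have := hoO k; omega⟩ with hfβ
      have hσe : ∀ k, σ (eIdx m k) = oIdx m (fα k) := by
        intro k
        refine Fin.ext ?_
        show ((σ (eIdx m k) : Fin (2 * m)) : ℕ)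
          = 2 * (((σ (eIdx m k) : Fin (2 * m)) : ℕ) / 2) + 1
        have := hoE k; omega
      have hσo : ∀ k, σ (oIdx m k) = eIdx m (fβ k) := by
        intro k
        refine Fin.ext ?_
        show ((σ (oIdx m k) : Fin (2 * m)) : ℕ)
          = 2 * (((σ (oIdx m k) : Fin (2 * m)) : ℕ) / 2)
        have := hoO k; omega
      have hαinj : Function.Injective fα := by
        intro a b hab
        have : σ (eIdx m a) = σ (eIdx m b) := by rw [hσe a, hσe b, hab]
        exact eIdx_injective m (σ.injective this)
      have hβinj : Function.Injective fβ := by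
        intro a b hab
        have : σ (oIdx m a) = σ (oIdx m b) := by rw [hσo a, hσo b, hab]
        exact oIdx_injective m (σ.injective this)
      refine ⟨(Equiv.ofBijective fα (Finite.injective_iff_bijective.mp hαinj),
        Equiv.ofBijective fβ (Finite.injective_iff_bijective.mp hβinj)), ?_⟩
      apply Equiv.ext
      intro i
      by_cases h : (i : ℕ) % 2 = 0
      · have hi : i = eIdx m ⟨(i : ℕ) / 2, by have := i.isLt; omega⟩ :=
          Fin.ext (show (i : ℕ) = 2 * ((i : ℕ) / 2) by omega)
        rw [hi, Φ_eIdx, hσe]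
        rfl
      · have hi : i = oIdx m ⟨(i : ℕ) / 2, by have := i.isLt; omega⟩ :=
          Fin.ext (show (i : ℕ) = 2 * ((i : ℕ) / 2) + 1 by omega)
        rw [hi, Φ_oIdx, hσo]
        rfl
    -- value of the product for a parity-swapping permutation
    have hval : ∀ p : Equiv.Perm (Fin m) × Equiv.Perm (Fin m),
        ∏ i, A (Φ m p i) i
          = (-1) ^ m * ((∏ k, C (p.1 k) k) * (∏ k, C k (p.2 k))) := by
      intro p
      rw [← Equiv.prod_comp (pe m).symm (fun i => A (Φ m p i) i), Fintype.prod_sum_type]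
      simp only [pe_symm_inl, pe_symm_inr, Φ_eIdx, Φ_oIdx]
      have hleft : ∀ k : Fin m, A (oIdx m (p.1 k)) (eIdx m k) = C (p.1 k) k :=
        fun k => (hC _ _).symm
      have hright : ∀ k : Fin m, A (eIdx m (p.2 k)) (oIdx m k) = -1 * C k (p.2 k) := by
        intro k
        rw [hskew, hC]
        ring
      rw [Finset.prod_congr rfl (fun k _ => hleft k),
        Finset.prod_congr rfl (fun k _ => hright k), Finset.prod_mul_distrib,
        Finset.prod_const, Finset.card_univ, Fintype.card_fin]
      ring
    have h2 : ∑ σ ∈ S, ∏ i, A (σ i) i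
        = ∑ p : Equiv.Perm (Fin m) × Equiv.Perm (Fin m),
            (-1) ^ m * ((∏ k, C (p.1 k) k) * (∏ k, C k (p.2 k))) := by
      refine (Finset.sum_bij (fun p _ => Φ m p) (fun p _ => hmem p) ?_ ?_ ?_).symm
      · intro p _ q _ h
        exact hinj h
      · intro σ hσ
        obtain ⟨p, hp⟩ := hsurj σ hσ
        exact ⟨p, Finset.mem_univ p, hp⟩
      · intro p _
        exact ((hval p).symm)
    have h3 : ∑ p : Equiv.Perm (Fin m) × Equiv.Perm (Fin m),
          (∏ k, C (p.1 k) k) * (∏ k, C k (p.2 k))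
        = C.permanent * C.transpose.permanent := by
      rw [Fintype.sum_prod_type]
      rw [show C.permanent * C.transpose.permanent
        = (∑ σ : Equiv.Perm (Fin m), ∏ i, C (σ i) i)
          * (∑ σ : Equiv.Perm (Fin m), ∏ i, C i (σ i)) from rfl]
      rw [Finset.sum_mul_sum]
    rw [h1, h2, ← Finset.mul_sum, h3, Matrix.permanent_transpose, sq]
  exact key _ (fun i j => rfl)
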